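/- Let n be a positive integer and λ ≥ 0 a real number. Define g : Finset (Fin n) → ℝ by g(A) = λ·(|A| + |{ i ∈ A : the predecessor of i is not in A }|), where for i ∈ Fin n the second set counts those indices i ∈ A such that either i = 0 or i − 1 ∉ A (so the second term counts the number of maximal runs of contiguous indices in A). Then g is monotone (A ⊆ B implies g(A) ≤ g(B)) and submodular (g(A ∪ B) + g(A ∩ B) ≤ g(A) + g(B) for all A, B ⊆ Fin n). -/

import Mathlib

open Classical in
/-- The contiguity-promoting set function
`g(A) = λ·(|A| + #{i ∈ A : the predecessor of i is not in A})`, where the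
second term counts the number of maximal runs of contiguous indices in `A`
(an index `i ∈ A` starts a run iff `i = 0` or `i − 1 ∉ A`). -/
noncomputable def runPenalty (n : ℕ) (lam : ℝ) (A : Finset (Fin n)) : ℝ :=
  lam * ((A.card : ℝ) +
    ((A.filter fun i => ∀ j : Fin n, (j : ℕ) + 1 = (i : ℕ) → j ∉ A).card : ℝ))

open Classical

namespace RunPenaltyAux

variable {n : ℕ}

noncomputable def startSet (A : Finset (Fin n)) : Finset (Fin n) :=
  A.filter fun i => ∀ j : Fin n, (j : ℕ) + 1 = (i : ℕ) → j ∉ A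

noncomputable def fnat (A : Finset (Fin n)) : ℕ := A.card + (startSet A).card

lemma card_startSet (A : Finset (Fin n)) :
    (startSet A).card =
      ∑ i : Fin n, if i ∈ A ∧ ∀ j : Fin n, (j : ℕ) + 1 = (i : ℕ) → j ∉ A then 1 else 0 := by
  have h : startSet A =
      Finset.univ.filter (fun i => i ∈ A ∧ ∀ j : Fin n, (j : ℕ) + 1 = (i : ℕ) → j ∉ A) := by
    ext i; simp [startSet]
  rw [h, Finset.card_filter]

lemma start_submodular (A B : Finset (Fin n)) :
    (startSet (A ∪ B)).card + (startSet (A ∩ B)).card ≤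
      (startSet A).card + (startSet B).card := by
  simp only [card_startSet, ← Finset.sum_add_distrib]
  apply Finset.sum_le_sum
  intro i _
  by_cases h0 : (i : ℕ) = 0
  · have hP : ∀ C : Finset (Fin n), ∀ j : Fin n, (j : ℕ) + 1 = (i : ℕ) → j ∉ C := by
      intro C j hj; omega
    have e : ∀ C : Finset (Fin n),
        (if i ∈ C ∧ ∀ j : Fin n, (j : ℕ) + 1 = (i : ℕ) → j ∉ C then 1 else 0 : ℕ) =
        (if i ∈ C then 1 else 0) := by
      intro C
      by_cases h : i ∈ C
      · rw [if_pos ⟨h, hP C⟩, if_pos h]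
      · rw [if_neg (fun hc => h hc.1), if_neg h]
    rw [e (A ∪ B), e (A ∩ B), e A, e B]
    by_cases hA : i ∈ A <;> by_cases hB : i ∈ B <;>
      simp [Finset.mem_union, Finset.mem_inter, hA, hB]
  · obtain ⟨k, hk⟩ : ∃ k, (i : ℕ) = k + 1 := ⟨(i : ℕ) - 1, by omega⟩
    have hkn : k < n := lt_trans (by omega) i.isLt
    set j : Fin n := ⟨k, hkn⟩ with hj
    have hP : ∀ C : Finset (Fin n),
        (∀ j' : Fin n, (j' : ℕ) + 1 = (i : ℕ) → j' ∉ C) ↔ j ∉ C := by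
      intro C
      constructor
      · intro h; exact h j (by simp [hj]; omega)
      · intro hjC j' hj'
        have : j' = j := by
          apply Fin.ext
          simp only [hj]
          omega
        rwa [this]
    have e : ∀ C : Finset (Fin n),
        (if i ∈ C ∧ ∀ j' : Fin n, (j' : ℕ) + 1 = (i : ℕ) → j' ∉ C then 1 else 0 : ℕ) =
        (if i ∈ C ∧ j ∉ C then 1 else 0) := by
      intro C; simp only [hP C]
    rw [e (A ∪ B), e (A ∩ B), e A, e B]
    by_cases hA : i ∈ A <;> by_cases hB : i ∈ B <;>
      by_cases hjA : j ∈ A <;> by_cases hjB : j ∈ B <;>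
      simp [Finset.mem_union, Finset.mem_inter, hA, hB, hjA, hjB]

lemma start_insert (A : Finset (Fin n)) (x : Fin n) :
    (startSet A).card ≤ (startSet (insert x A)).card + 1 := by
  have hsub : startSet A ⊆
      startSet (insert x A) ∪ Finset.univ.filter (fun i => (i : ℕ) = (x : ℕ) + 1) := by
    intro i hi
    simp only [startSet, Finset.mem_filter] at hi
    obtain ⟨hiA, hP⟩ := hi
    by_cases hix : (i : ℕ) = (x : ℕ) + 1
    · exact Finset.mem_union_right _ (by simp [hix])
    · apply Finset.mem_union_left
      simp only [startSet, Finset.mem_filter]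
      refine ⟨Finset.mem_insert_of_mem hiA, ?_⟩
      intro j hj hjmem
      rcases Finset.mem_insert.mp hjmem with h | h
      · apply hix; rw [← hj, h]
      · exact hP j hj h
  have hone : (Finset.univ.filter (fun i : Fin n => (i : ℕ) = (x : ℕ) + 1)).card ≤ 1 := by
    apply Finset.card_le_one.mpr
    intro a ha b hb
    simp only [Finset.mem_filter] at ha hb
    apply Fin.ext; omega
  calc (startSet A).card
      ≤ (startSet (insert x A) ∪
          Finset.univ.filter (fun i => (i : ℕ) = (x : ℕ) + 1)).card :=
        Finset.card_le_card hsub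
    _ ≤ (startSet (insert x A)).card +
          (Finset.univ.filter (fun i : Fin n => (i : ℕ) = (x : ℕ) + 1)).card :=
        Finset.card_union_le _ _
    _ ≤ (startSet (insert x A)).card + 1 := by omega

lemma fnat_insert (A : Finset (Fin n)) (x : Fin n) :
    fnat A ≤ fnat (insert x A) := by
  by_cases hx : x ∈ A
  · rw [Finset.insert_eq_self.mpr hx]
  · have hc : (insert x A).card = A.card + 1 := Finset.card_insert_of_notMem hx
    have hs := start_insert A x
    unfold fnat
    omega

lemma fnat_union (s A : Finset (Fin n)) : fnat A ≤ fnat (A ∪ s) := by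
  induction s using Finset.induction_on with
  | empty => simp
  | insert _ _ h ih =>
      rename_i a s
      rw [Finset.union_insert]
      exact le_trans ih (fnat_insert _ a)

lemma fnat_mono {A B : Finset (Fin n)} (h : A ⊆ B) : fnat A ≤ fnat B := by
  have := fnat_union B A
  rwa [Finset.union_eq_right.mpr h] at this

lemma fnat_submodular (A B : Finset (Fin n)) :
    fnat (A ∪ B) + fnat (A ∩ B) ≤ fnat A + fnat B := by
  have hc := Finset.card_union_add_card_inter A B
  have hs := start_submodular A B
  unfold fnat
  omega

lemma runPenalty_eq (lam : ℝ) (A : Finset (Fin n)) :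
    runPenalty n lam A = lam * (fnat A : ℝ) := by
  have h1 : ((do let a ← A; pure ((a : Fin n) : ℕ)) : Finset ℕ) = A.image Fin.val := by
    ext x
    simp [Finset.bind_def, Finset.mem_sup, Finset.pure_def, Finset.mem_image]
  have h2 : ((A.filter fun i => ∀ j : Fin n, (j : ℕ) + 1 = (i : ℕ) → j ∉ A).card : ℕ) =
      ((A.filter fun i : Fin n => ∀ j : Fin n, (j : ℕ) + 1 = (i : ℕ) → j ∉ A).card : ℕ) := by
    show (Finset.filter _ ((do let a ← A; pure ((a : Fin n) : ℕ)) : Finset ℕ)).card = _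
    rw [h1, Finset.filter_image, Finset.card_image_of_injective _ Fin.val_injective]
  unfold runPenalty fnat startSet
  rw [h2, Nat.cast_add]

end RunPenaltyAux

/-- For `λ ≥ 0`, the contiguity-promoting set function is monotone and
submodular. -/
theorem runPenalty_monotone_submodular
    (n : ℕ) (hn : 0 < n) (lam : ℝ) (hlam : 0 ≤ lam) :
    (∀ A B : Finset (Fin n), A ⊆ B → runPenalty n lam A ≤ runPenalty n lam B) ∧
    (∀ A B : Finset (Fin n),
      runPenalty n lam (A ∪ B) + runPenalty n lam (A ∩ B) ≤
      runPenalty n lam A + runPenalty n lam B) := by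
  constructor
  · intro A B h
    rw [RunPenaltyAux.runPenalty_eq, RunPenaltyAux.runPenalty_eq]
    exact mul_le_mul_of_nonneg_left
      (Nat.cast_le.mpr (RunPenaltyAux.fnat_mono h)) hlam
  · intro A B
    rw [RunPenaltyAux.runPenalty_eq, RunPenaltyAux.runPenalty_eq,
        RunPenaltyAux.runPenalty_eq, RunPenaltyAux.runPenalty_eq,
        ← mul_add, ← mul_add]
    apply mul_le_mul_of_nonneg_left _ hlam
    exact_mod_cast RunPenaltyAux.fnat_submodular A B
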